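/- For m ≥ 2, the distinguishing index of the Mycielskian of the star K_{1,m} satisfies Dist′(μ(K_{1,m})) ≥ r, where r is the minimum natural number such that r² ≥ m + 1; that is, μ(K_{1,m}) has no distinguishing edge coloring with fewer than r colors. -/

import Mathlib

open SimpleGraph

universe u

/-- A distinguishing edge coloring: no nontrivial automorphism preserves the coloring. -/
def IsDistEdgeColoring {V : Type u} (G : SimpleGraph V) {C : Type*} (c : G.edgeSet → C) : Prop :=
  ∀ φ : G ≃g G, (∀ e : G.edgeSet, c (φ.mapEdgeSet e) = c e) → ∀ v, φ v = v

/-- The distinguishing index: least number of colors in a distinguishing edge coloring. -/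
noncomputable def distIndex {V : Type u} (G : SimpleGraph V) : ℕ :=
  sInf {k : ℕ | ∃ c : G.edgeSet → Fin k, IsDistEdgeColoring G c}

/-- The star `K_{1,m}` with center `0`. -/
def starGraph (m : ℕ) : SimpleGraph (Fin (m + 1)) :=
  SimpleGraph.fromRel fun a _ => a = 0

/-- The Mycielskian: `Sum.inl a` are original vertices, `Sum.inr (Sum.inl a)` their
shadows, and `Sum.inr (Sum.inr _)` the root. -/
def myc {V : Type u} (G : SimpleGraph V) : SimpleGraph (V ⊕ V ⊕ PUnit.{u+1}) :=
  SimpleGraph.fromRel fun x y =>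
    match x, y with
    | Sum.inl a, Sum.inl b => G.Adj a b
    | Sum.inl a, Sum.inr (Sum.inl b) => G.Adj a b
    | Sum.inr (Sum.inl _), Sum.inr (Sum.inr _) => True
    | _, _ => False

/-- The generalized Mycielskian with `t` extra levels: `Sum.inl (j, a)` is the level-`j`
copy of vertex `a` (level `0` being the original vertices), and `Sum.inr _` is the root. -/
def genMyc {V : Type u} (G : SimpleGraph V) (t : ℕ) :
    SimpleGraph ((Fin (t + 1) × V) ⊕ PUnit.{u+1}) :=
  SimpleGraph.fromRel fun x y =>
    match x, y with
    | Sum.inl (j, a), Sum.inl (k, b) =>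
        ((j.val = 0 ∧ k.val = 0) ∨ k.val = j.val + 1) ∧ G.Adj a b
    | Sum.inl (j, _), Sum.inr _ => j.val = t
    | _, _ => False

variable {m : ℕ}

lemma star_adj {a b : Fin (m+1)} :
    (_root_.starGraph m).Adj a b ↔ (a = 0 ∧ b ≠ 0) ∨ (b = 0 ∧ a ≠ 0) := by
  simp only [_root_.starGraph, SimpleGraph.fromRel_adj]
  constructor
  · rintro ⟨h, rfl | rfl⟩
    · exact Or.inl ⟨rfl, fun hb => h hb.symm⟩
    · exact Or.inr ⟨rfl, h⟩
  · rintro (⟨rfl, h⟩ | ⟨rfl, h⟩)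
    · exact ⟨fun e => h e.symm, Or.inl rfl⟩
    · exact ⟨h, Or.inr rfl⟩

variable {V : Type u} {G : SimpleGraph V}

lemma madj_ll {a b : V} : (myc G).Adj (Sum.inl a) (Sum.inl b) ↔ G.Adj a b := by
  simp only [myc, SimpleGraph.fromRel_adj]
  constructor
  · rintro ⟨h, h1 | h1⟩ <;> [exact h1; exact h1.symm]
  · intro h; exact ⟨by simp [h.ne], Or.inl h⟩

lemma madj_lm {a b : V} : (myc G).Adj (Sum.inl a) (Sum.inr (Sum.inl b)) ↔ G.Adj a b := by
  simp only [myc, SimpleGraph.fromRel_adj]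
  constructor
  · rintro ⟨h, h1 | h1⟩ <;> [exact h1; exact h1.elim]
  · intro h; exact ⟨by simp, Or.inl h⟩

lemma madj_lr {a : V} {u} : ¬ (myc G).Adj (Sum.inl a) (Sum.inr (Sum.inr u)) := by
  simp only [myc, SimpleGraph.fromRel_adj]
  rintro ⟨h, h1 | h1⟩ <;> exact h1

lemma madj_mm {a b : V} : ¬ (myc G).Adj (Sum.inr (Sum.inl a)) (Sum.inr (Sum.inl b)) := by
  simp only [myc, SimpleGraph.fromRel_adj]
  rintro ⟨h, h1 | h1⟩ <;> exact h1

lemma madj_mr {a : V} {u} : (myc G).Adj (Sum.inr (Sum.inl a)) (Sum.inr (Sum.inr u)) := by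
  simp only [myc, SimpleGraph.fromRel_adj]
  exact ⟨by simp, Or.inl trivial⟩

lemma madj_rr {u u' : PUnit.{u+1}} : ¬ (myc G).Adj (Sum.inr (Sum.inr u)) (Sum.inr (Sum.inr u')) := by
  simp only [myc, SimpleGraph.fromRel_adj]
  rintro ⟨h, h1 | h1⟩ <;> exact h1

lemma madj_ml {V : Type u} {G : SimpleGraph V} {a b : V} :
    (myc G).Adj (Sum.inr (Sum.inl a)) (Sum.inl b) ↔ G.Adj b a := by
  rw [SimpleGraph.adj_comm]; exact madj_lm
lemma madj_rl {V : Type u} {G : SimpleGraph V} {a : V} {u} :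
    ¬ (myc G).Adj (Sum.inr (Sum.inr u)) (Sum.inl a) := by
  rw [SimpleGraph.adj_comm]; exact madj_lr
lemma madj_rm {V : Type u} {G : SimpleGraph V} {a : V} {u} :
    (myc G).Adj (Sum.inr (Sum.inr u)) (Sum.inr (Sum.inl a)) :=
  madj_mr.symm

variable {m : ℕ}

lemma star_adj_perm {s t : Equiv.Perm (Fin (m+1))} (hs : s 0 = 0) (ht : t 0 = 0)
    {a b : Fin (m+1)} : (_root_.starGraph m).Adj (s a) (t b) ↔ (_root_.starGraph m).Adj a b := by
  have h1 : ∀ x, s x = 0 ↔ x = 0 := fun x => ⟨fun h => s.injective (h.trans hs.symm), fun h => h ▸ hs⟩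
  have h2 : ∀ x, t x = 0 ↔ x = 0 := fun x => ⟨fun h => t.injective (h.trans ht.symm), fun h => h ▸ ht⟩
  simp [star_adj, h1, h2]

/-- automorphism permuting original leaves by `s` and shadow leaves by `t`. -/
def permIso (s t : Equiv.Perm (Fin (m+1))) (hs : s 0 = 0) (ht : t 0 = 0) :
    myc (_root_.starGraph m) ≃g myc (_root_.starGraph m) where
  toEquiv := Equiv.sumCongr s (Equiv.sumCongr t (Equiv.refl _))
  map_rel_iff' := by
    rintro (a | a | a) (b | b | b) <;>
      simp only [Equiv.sumCongr_apply, Sum.map_inl, Sum.map_inr, Equiv.coe_refl, id] <;>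
      simp [madj_ll, madj_lm, madj_lr, madj_mm, madj_mr, madj_rr, madj_ml, madj_rl, madj_rm,
        star_adj_perm hs ht, star_adj_perm hs hs, star_adj_perm ht ht, star_adj_perm ht hs]

def crossFun (σ : Equiv.Perm (Fin (m+1))) :
    (Fin (m+1) ⊕ Fin (m+1) ⊕ PUnit.{1}) → (Fin (m+1) ⊕ Fin (m+1) ⊕ PUnit.{1})
  | Sum.inl a => if a = 0 then Sum.inl 0 else Sum.inr (Sum.inl (σ a))
  | Sum.inr (Sum.inl a) => if a = 0 then Sum.inr (Sum.inr PUnit.unit) else Sum.inl (σ⁻¹ a)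
  | Sum.inr (Sum.inr _) => Sum.inr (Sum.inl 0)

variable {σ : Equiv.Perm (Fin (m+1))}

lemma sig_ne (hσ : σ 0 = 0) {a : Fin (m+1)} (ha : a ≠ 0) : σ a ≠ 0 :=
  fun h => ha (σ.injective (h.trans hσ.symm))

lemma siginv_zero (hσ : σ 0 = 0) : σ⁻¹ 0 = 0 := by
  conv_lhs => rw [← hσ]
  exact σ.symm_apply_apply 0

lemma siginv_ne (hσ : σ 0 = 0) {a : Fin (m+1)} (ha : a ≠ 0) : σ⁻¹ a ≠ 0 :=
  sig_ne (siginv_zero hσ) ha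

lemma crossFun_invol (hσ : σ 0 = 0) : Function.Involutive (crossFun σ) := by
  rintro (a | a | u)
  · by_cases ha : a = 0
    · subst ha; simp [crossFun]
    · simp [crossFun, ha, sig_ne hσ ha]
  · by_cases ha : a = 0
    · subst ha; simp [crossFun]
    · simpa [crossFun, ha] using siginv_ne hσ ha
  · simp [crossFun]

lemma crossFun_adj (hσ : σ 0 = 0) {x y} (h : (myc (_root_.starGraph m)).Adj x y) :
    (myc (_root_.starGraph m)).Adj (crossFun σ x) (crossFun σ y) := by
  rcases x with a | a | u <;> rcases y with b | b | u'
  · rcases star_adj.mp (madj_ll.mp h) with ⟨rfl, hb⟩ | ⟨rfl, ha⟩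
    · simpa [crossFun, hb] using madj_lm.mpr (star_adj.mpr (Or.inl ⟨rfl, sig_ne hσ hb⟩))
    · simpa [crossFun, ha] using madj_ml.mpr (star_adj.mpr (Or.inl ⟨rfl, sig_ne hσ ha⟩))
  · rcases star_adj.mp (madj_lm.mp h) with ⟨rfl, hb⟩ | ⟨rfl, ha⟩
    · simpa [crossFun, hb] using madj_ll.mpr (star_adj.mpr (Or.inl ⟨rfl, siginv_ne hσ hb⟩))
    · simpa [crossFun, ha] using (madj_mr (a := σ a) (u := PUnit.unit))
  · exact (madj_lr h).elim
  · rcases star_adj.mp (madj_ml.mp h) with ⟨rfl, hb⟩ | ⟨rfl, ha⟩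
    · simpa [crossFun, hb] using madj_ll.mpr (star_adj.mpr (Or.inr ⟨rfl, siginv_ne hσ hb⟩))
    · simpa [crossFun, ha] using (madj_rm (a := σ b) (u := PUnit.unit))
  · exact (madj_mm h).elim
  · by_cases ha : a = 0
    · subst ha; simpa [crossFun] using (madj_rm (a := (0 : Fin (m+1))) (u := PUnit.unit))
    · simpa [crossFun, ha] using madj_lm.mpr (star_adj.mpr (Or.inr ⟨rfl, siginv_ne hσ ha⟩))
  · exact (madj_rl h).elim
  · by_cases hb : b = 0
    · subst hb; simpa [crossFun] using (madj_mr (a := (0 : Fin (m+1))) (u := PUnit.unit))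
    · simpa [crossFun, hb] using madj_ml.mpr (star_adj.mpr (Or.inr ⟨rfl, siginv_ne hσ hb⟩))
  · exact (madj_rr h).elim

def crossIso (hσ : σ 0 = 0) : myc (_root_.starGraph m) ≃g myc (_root_.starGraph m) where
  toEquiv := (crossFun_invol hσ).toPerm _
  map_rel_iff' := by
    intro x y
    constructor
    · intro h
      have := crossFun_adj hσ h
      simpa [Function.Involutive.toPerm, crossFun_invol hσ x, crossFun_invol hσ y] using this
    · exact crossFun_adj hσ

lemma c_congr {V : Type u} {G : SimpleGraph V} {C : Type*} {c : G.edgeSet → C}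
    {e f : G.edgeSet} (h : e.val = f.val) : c e = c f := by
  cases e; cases f; cases h; rfl

lemma mapEdgeSet_val {V : Type u} {G : SimpleGraph V} (φ : G ≃g G) (x y : V)
    (h : s(x,y) ∈ G.edgeSet) :
    (φ.mapEdgeSet ⟨s(x,y), h⟩).val = s(φ x, φ y) := by
  simp [SimpleGraph.Iso.mapEdgeSet, SimpleGraph.Hom.mapEdgeSet, Sym2.map_pair_eq]

lemma fix_of_edge {V : Type u} {G : SimpleGraph V} (φ : G ≃g G)
    (hφ : ∀ e : G.edgeSet, φ.mapEdgeSet e = e) {x y : V} (h : G.Adj x y) :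
    (φ x = x ∧ φ y = y) ∨ (φ x = y ∧ φ y = x) := by
  have := congrArg Subtype.val (hφ ⟨s(x,y), h⟩)
  rw [mapEdgeSet_val φ x y h] at this
  rwa [Sym2.eq_iff] at this

lemma nonempty_dist (hm : 2 ≤ m) :
    ∃ k : ℕ, ∃ c : (myc (_root_.starGraph m)).edgeSet → Fin k,
      IsDistEdgeColoring (myc (_root_.starGraph m)) c := by
  classical
  set M := myc (_root_.starGraph m) with hM
  haveI : Fintype M.edgeSet := Fintype.ofFinite _
  refine ⟨Fintype.card M.edgeSet, Fintype.equivFin M.edgeSet, ?_⟩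
  intro φ hφ
  have hfixe : ∀ e : M.edgeSet, φ.mapEdgeSet e = e := fun e =>
    (Fintype.equivFin M.edgeSet).injective (hφ e)
  have key : ∀ {x y}, M.Adj x y → (φ x = x ∧ φ y = y) ∨ (φ x = y ∧ φ y = x) :=
    fun h => fix_of_edge φ hfixe h
  set x1 : Fin (m+1) := ⟨1, by omega⟩ with hx1
  set x2 : Fin (m+1) := ⟨2, by omega⟩ with hx2
  have h10 : x1 ≠ 0 := by simp [hx1, Fin.ext_iff]
  have h20 : x2 ≠ 0 := by simp [hx2, Fin.ext_iff]
  have h12 : x1 ≠ x2 := by simp [hx1, hx2, Fin.ext_iff]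
  rintro (a | a | u)
  · by_cases ha : a = 0
    · subst ha
      have e1 := key (madj_ll.mpr (star_adj.mpr (Or.inl ⟨rfl, h10⟩)))
      have e2 := key (madj_ll.mpr (star_adj.mpr (Or.inl ⟨rfl, h20⟩)))
      rcases e1 with ⟨h,_⟩|⟨h,h'⟩ <;> rcases e2 with ⟨g,_⟩|⟨g,g'⟩ <;> simp_all
    · have e1 := key (madj_ll.mpr (star_adj.mpr (Or.inr ⟨rfl, ha⟩)))
      have e2 := key (madj_lm.mpr (star_adj.mpr (Or.inr ⟨rfl, ha⟩)))
      rcases e1 with ⟨h,_⟩|⟨h,h'⟩ <;> rcases e2 with ⟨g,_⟩|⟨g,g'⟩ <;> simp_all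
  · by_cases ha : a = 0
    · subst ha
      have e1 := key (madj_lm.mpr (star_adj.mpr (Or.inr ⟨rfl, h10⟩)) : M.Adj (Sum.inl x1) _)
      have e2 := key (madj_lm.mpr (star_adj.mpr (Or.inr ⟨rfl, h20⟩)) : M.Adj (Sum.inl x2) _)
      rcases e1 with ⟨_,h⟩|⟨h,h'⟩ <;> rcases e2 with ⟨_,g⟩|⟨g,g'⟩ <;> simp_all
    · have e1 := key (madj_lm.mpr (star_adj.mpr (Or.inl ⟨rfl, ha⟩)) : M.Adj (Sum.inl 0) _)
      have e2 := key (madj_mr (a := a) (u := PUnit.unit))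
      rcases e1 with ⟨_,h⟩|⟨h,h'⟩ <;> rcases e2 with ⟨g,_⟩|⟨g,g'⟩ <;> simp_all
  · cases u
    have e1 := key (madj_mr (a := x1) (u := PUnit.unit))
    have e2 := key (madj_mr (a := x2) (u := PUnit.unit))
    rcases e1 with ⟨_,h⟩|⟨h,h'⟩ <;> rcases e2 with ⟨_,g⟩|⟨g,g'⟩ <;> simp_all

lemma c_map {V : Type u} {G : SimpleGraph V} {C : Type*} (c : G.edgeSet → C) (φ : G ≃g G)
    {x y : V} (he : s(x,y) ∈ G.edgeSet) :
    c (φ.mapEdgeSet ⟨s(x,y), he⟩) = c ⟨s(φ x, φ y), φ.map_rel_iff.mpr he⟩ :=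
  c_congr (mapEdgeSet_val φ x y he)

lemma permIso_apply_l {s t : Equiv.Perm (Fin (m+1))} (hs : s 0 = 0) (ht : t 0 = 0)
    (a : Fin (m+1)) : permIso s t hs ht (Sum.inl a) = Sum.inl (s a) := rfl
lemma permIso_apply_m {s t : Equiv.Perm (Fin (m+1))} (hs : s 0 = 0) (ht : t 0 = 0)
    (a : Fin (m+1)) : permIso s t hs ht (Sum.inr (Sum.inl a)) = Sum.inr (Sum.inl (t a)) := rfl
lemma permIso_apply_r {s t : Equiv.Perm (Fin (m+1))} (hs : s 0 = 0) (ht : t 0 = 0)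
    (u : PUnit.{1}) : permIso s t hs ht (Sum.inr (Sum.inr u)) = Sum.inr (Sum.inr u) := rfl
lemma crossIso_apply {σ : Equiv.Perm (Fin (m+1))} (hσ : σ 0 = 0) (x) :
    crossIso hσ x = crossFun σ x := rfl

section key
variable (m)

def eV1 (a : Fin (m+1)) (ha : a ≠ 0) : (myc (_root_.starGraph m)).edgeSet :=
  ⟨s(Sum.inl a, Sum.inl 0), madj_ll.mpr (star_adj.mpr (Or.inr ⟨rfl, ha⟩))⟩
def eV2 (a : Fin (m+1)) (ha : a ≠ 0) : (myc (_root_.starGraph m)).edgeSet :=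
  ⟨s(Sum.inl a, Sum.inr (Sum.inl 0)), madj_lm.mpr (star_adj.mpr (Or.inr ⟨rfl, ha⟩))⟩
def eU1 (a : Fin (m+1)) (ha : a ≠ 0) : (myc (_root_.starGraph m)).edgeSet :=
  ⟨s(Sum.inl 0, Sum.inr (Sum.inl a)), madj_lm.mpr (star_adj.mpr (Or.inl ⟨rfl, ha⟩))⟩
def eU2 (a : Fin (m+1)) (ha : a ≠ 0) : (myc (_root_.starGraph m)).edgeSet :=
  ⟨s(Sum.inr (Sum.inl a), Sum.inr (Sum.inr PUnit.unit)),
    (madj_mr : (myc (_root_.starGraph m)).Adj _ _)⟩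

variable {m}

lemma key_lemma (hm : 2 ≤ m) {k : ℕ} (c : (myc (_root_.starGraph m)).edgeSet → Fin k)
    (hc : IsDistEdgeColoring (myc (_root_.starGraph m)) c) : m + 1 ≤ k ^ 2 := by
  classical
  -- the color-pair functions
  set p : {i : Fin (m+1) // i ≠ 0} → Fin k × Fin k :=
    fun i => (c (eV1 m i.1 i.2), c (eV2 m i.1 i.2)) with hp
  set q : {i : Fin (m+1) // i ≠ 0} → Fin k × Fin k :=
    fun i => (c (eU1 m i.1 i.2), c (eU2 m i.1 i.2)) with hq
  have cardsub : Fintype.card {i : Fin (m+1) // i ≠ 0} = m := by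
    simp [Fintype.card_subtype_compl]
  -- injectivity of p
  have hpinj : Function.Injective p := by
    intro i j hij
    by_contra hne
    have hne1 : i.1 ≠ j.1 := fun h => hne (Subtype.ext h)
    set s : Equiv.Perm (Fin (m+1)) := Equiv.swap i.1 j.1 with hsd
    have hs : s 0 = 0 := Equiv.swap_apply_of_ne_of_ne (Ne.symm i.2) (Ne.symm j.2)
    have hsne : ∀ (a : Fin (m+1)), a ≠ 0 → s a ≠ 0 := fun a ha h =>
      ha (s.injective (h.trans hs.symm))
    have c1 := congrArg Prod.fst hij
    have c2 := congrArg Prod.snd hij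
    simp only [hp] at c1 c2
    have hswap1 : ∀ (a : Fin (m+1)) (ha : a ≠ 0) (ha' : s a ≠ 0),
        c (eV1 m (s a) ha') = c (eV1 m a ha) := by
      intro a ha ha'
      rcases eq_or_ne a i.1 with h | hai
      · have h1 : s a = j.1 := by rw [h]; exact Equiv.swap_apply_left _ _
        calc c (eV1 m (s a) ha') = c (eV1 m j.1 j.2) := c_congr (by simp only [eV1]; rw [h1])
          _ = c (eV1 m i.1 i.2) := c1.symm
          _ = c (eV1 m a ha) := c_congr (by simp only [eV1]; rw [h])
      rcases eq_or_ne a j.1 with h | haj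
      · have h1 : s a = i.1 := by rw [h]; exact Equiv.swap_apply_right _ _
        calc c (eV1 m (s a) ha') = c (eV1 m i.1 i.2) := c_congr (by simp only [eV1]; rw [h1])
          _ = c (eV1 m j.1 j.2) := c1
          _ = c (eV1 m a ha) := c_congr (by simp only [eV1]; rw [h])
      · exact c_congr (by simp only [eV1]; rw [Equiv.swap_apply_of_ne_of_ne hai haj])
    have hswap2 : ∀ (a : Fin (m+1)) (ha : a ≠ 0) (ha' : s a ≠ 0),
        c (eV2 m (s a) ha') = c (eV2 m a ha) := by
      intro a ha ha'
      rcases eq_or_ne a i.1 with h | hai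
      · have h1 : s a = j.1 := by rw [h]; exact Equiv.swap_apply_left _ _
        calc c (eV2 m (s a) ha') = c (eV2 m j.1 j.2) := c_congr (by simp only [eV2]; rw [h1])
          _ = c (eV2 m i.1 i.2) := c2.symm
          _ = c (eV2 m a ha) := c_congr (by simp only [eV2]; rw [h])
      rcases eq_or_ne a j.1 with h | haj
      · have h1 : s a = i.1 := by rw [h]; exact Equiv.swap_apply_right _ _
        calc c (eV2 m (s a) ha') = c (eV2 m i.1 i.2) := c_congr (by simp only [eV2]; rw [h1])
          _ = c (eV2 m j.1 j.2) := c2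
          _ = c (eV2 m a ha) := c_congr (by simp only [eV2]; rw [h])
      · exact c_congr (by simp only [eV2]; rw [Equiv.swap_apply_of_ne_of_ne hai haj])
    set φ := permIso s 1 hs (Equiv.Perm.one_apply 0) with hφd
    have hpres : ∀ e : (myc (_root_.starGraph m)).edgeSet, c (φ.mapEdgeSet e) = c e := by
      rintro ⟨e, he⟩
      revert he
      refine Sym2.ind (fun x y => ?_) e
      intro he
      rw [c_map c φ he]
      rcases x with a | a | u <;> rcases y with b | b | u'
      · rcases star_adj.mp (madj_ll.mp he) with ⟨rfl, hb⟩ | ⟨rfl, ha⟩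
        · calc c ⟨s(φ (Sum.inl 0), φ (Sum.inl b)), _⟩
              = c (eV1 m (s b) (hsne b hb)) := c_congr (by
                simp only [hφd, permIso_apply_l, eV1, hs]; exact Sym2.eq_swap)
            _ = c (eV1 m b hb) := hswap1 b hb _
            _ = c ⟨s(Sum.inl 0, Sum.inl b), he⟩ := c_congr (by
                simp only [eV1]; exact Sym2.eq_swap)
        · calc c ⟨s(φ (Sum.inl a), φ (Sum.inl 0)), _⟩
              = c (eV1 m (s a) (hsne a ha)) := c_congr (by
                simp only [hφd, permIso_apply_l, eV1, hs])
            _ = c (eV1 m a ha) := hswap1 a ha _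
            _ = c ⟨s(Sum.inl a, Sum.inl 0), he⟩ := c_congr rfl
      · rcases star_adj.mp (madj_lm.mp he) with ⟨rfl, hb⟩ | ⟨rfl, ha⟩
        · exact c_congr (by
            simp only [hφd, permIso_apply_l, permIso_apply_m, hs, Equiv.Perm.one_apply])
        · calc c ⟨s(φ (Sum.inl a), φ (Sum.inr (Sum.inl 0))), _⟩
              = c (eV2 m (s a) (hsne a ha)) := c_congr (by
                simp only [hφd, permIso_apply_l, permIso_apply_m, Equiv.Perm.one_apply, eV2])
            _ = c (eV2 m a ha) := hswap2 a ha _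
            _ = c ⟨s(Sum.inl a, Sum.inr (Sum.inl 0)), he⟩ := c_congr rfl
      · exact absurd ((SimpleGraph.mem_edgeSet _).mp he) madj_lr
      · rcases star_adj.mp (madj_ml.mp he) with ⟨rfl, ha⟩ | ⟨rfl, hb⟩
        · exact c_congr (by
            simp only [hφd, permIso_apply_l, permIso_apply_m, hs, Equiv.Perm.one_apply])
        · calc c ⟨s(φ (Sum.inr (Sum.inl 0)), φ (Sum.inl b)), _⟩
              = c (eV2 m (s b) (hsne b hb)) := c_congr (by
                simp only [hφd, permIso_apply_l, permIso_apply_m, Equiv.Perm.one_apply, eV2]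
                exact Sym2.eq_swap)
            _ = c (eV2 m b hb) := hswap2 b hb _
            _ = c ⟨s(Sum.inr (Sum.inl 0), Sum.inl b), he⟩ := c_congr (by
                simp only [eV2]; exact Sym2.eq_swap)
      · exact absurd ((SimpleGraph.mem_edgeSet _).mp he) madj_mm
      · exact c_congr (by
          simp only [hφd, permIso_apply_m, permIso_apply_r, Equiv.Perm.one_apply])
      · exact absurd ((SimpleGraph.mem_edgeSet _).mp he) madj_rl
      · exact c_congr (by
          simp only [hφd, permIso_apply_m, permIso_apply_r, Equiv.Perm.one_apply])
      · exact absurd ((SimpleGraph.mem_edgeSet _).mp he) madj_rr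
    have := hc φ hpres (Sum.inl i.1)
    rw [hφd, permIso_apply_l] at this
    exact hne1 (by simpa [hsd, Equiv.swap_apply_left] using (Sum.inl.inj this).symm)
  have hqinj : Function.Injective q := by
    intro i j hij
    by_contra hne
    have hne1 : i.1 ≠ j.1 := fun h => hne (Subtype.ext h)
    set t : Equiv.Perm (Fin (m+1)) := Equiv.swap i.1 j.1 with htd
    have ht : t 0 = 0 := Equiv.swap_apply_of_ne_of_ne (Ne.symm i.2) (Ne.symm j.2)
    have htne : ∀ (a : Fin (m+1)), a ≠ 0 → t a ≠ 0 := fun a ha h =>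
      ha (t.injective (h.trans ht.symm))
    have c1 := congrArg Prod.fst hij
    have c2 := congrArg Prod.snd hij
    simp only [hq] at c1 c2
    have hswap1 : ∀ (a : Fin (m+1)) (ha : a ≠ 0) (ha' : t a ≠ 0),
        c (eU1 m (t a) ha') = c (eU1 m a ha) := by
      intro a ha ha'
      rcases eq_or_ne a i.1 with h | hai
      · have h1 : t a = j.1 := by rw [h]; exact Equiv.swap_apply_left _ _
        calc c (eU1 m (t a) ha') = c (eU1 m j.1 j.2) := c_congr (by simp only [eU1]; rw [h1])
          _ = c (eU1 m i.1 i.2) := c1.symm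
          _ = c (eU1 m a ha) := c_congr (by simp only [eU1]; rw [h])
      rcases eq_or_ne a j.1 with h | haj
      · have h1 : t a = i.1 := by rw [h]; exact Equiv.swap_apply_right _ _
        calc c (eU1 m (t a) ha') = c (eU1 m i.1 i.2) := c_congr (by simp only [eU1]; rw [h1])
          _ = c (eU1 m j.1 j.2) := c1
          _ = c (eU1 m a ha) := c_congr (by simp only [eU1]; rw [h])
      · exact c_congr (by simp only [eU1]; rw [Equiv.swap_apply_of_ne_of_ne hai haj])
    have hswap2 : ∀ (a : Fin (m+1)) (ha : a ≠ 0) (ha' : t a ≠ 0),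
        c (eU2 m (t a) ha') = c (eU2 m a ha) := by
      intro a ha ha'
      rcases eq_or_ne a i.1 with h | hai
      · have h1 : t a = j.1 := by rw [h]; exact Equiv.swap_apply_left _ _
        calc c (eU2 m (t a) ha') = c (eU2 m j.1 j.2) := c_congr (by simp only [eU2]; rw [h1])
          _ = c (eU2 m i.1 i.2) := c2.symm
          _ = c (eU2 m a ha) := c_congr (by simp only [eU2]; rw [h])
      rcases eq_or_ne a j.1 with h | haj
      · have h1 : t a = i.1 := by rw [h]; exact Equiv.swap_apply_right _ _
        calc c (eU2 m (t a) ha') = c (eU2 m i.1 i.2) := c_congr (by simp only [eU2]; rw [h1])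
          _ = c (eU2 m j.1 j.2) := c2
          _ = c (eU2 m a ha) := c_congr (by simp only [eU2]; rw [h])
      · exact c_congr (by simp only [eU2]; rw [Equiv.swap_apply_of_ne_of_ne hai haj])
    set φ := permIso 1 t (Equiv.Perm.one_apply 0) ht with hφd
    have hpres : ∀ e : (myc (_root_.starGraph m)).edgeSet, c (φ.mapEdgeSet e) = c e := by
      rintro ⟨e, he⟩
      revert he
      refine Sym2.ind (fun x y => ?_) e
      intro he
      rw [c_map c φ he]
      rcases x with a | a | u <;> rcases y with b | b | u'
      · exact c_congr (by
          simp only [hφd, permIso_apply_l, Equiv.Perm.one_apply])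
      · rcases star_adj.mp (madj_lm.mp he) with ⟨rfl, hb⟩ | ⟨rfl, ha⟩
        · calc c ⟨s(φ (Sum.inl 0), φ (Sum.inr (Sum.inl b))), _⟩
              = c (eU1 m (t b) (htne b hb)) := c_congr (by
                simp only [hφd, permIso_apply_l, permIso_apply_m, Equiv.Perm.one_apply, eU1])
            _ = c (eU1 m b hb) := hswap1 b hb _
            _ = c ⟨s(Sum.inl 0, Sum.inr (Sum.inl b)), he⟩ := c_congr rfl
        · exact c_congr (by
            simp only [hφd, permIso_apply_l, permIso_apply_m, ht, Equiv.Perm.one_apply])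
      · exact absurd ((SimpleGraph.mem_edgeSet _).mp he) madj_lr
      · rcases star_adj.mp (madj_ml.mp he) with ⟨rfl, ha⟩ | ⟨rfl, hb⟩
        · calc c ⟨s(φ (Sum.inr (Sum.inl a)), φ (Sum.inl 0)), _⟩
              = c (eU1 m (t a) (htne a ha)) := c_congr (by
                simp only [hφd, permIso_apply_l, permIso_apply_m, Equiv.Perm.one_apply, eU1]
                exact Sym2.eq_swap)
            _ = c (eU1 m a ha) := hswap1 a ha _
            _ = c ⟨s(Sum.inr (Sum.inl a), Sum.inl 0), he⟩ := c_congr (by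
                simp only [eU1]; exact Sym2.eq_swap)
        · exact c_congr (by
            simp only [hφd, permIso_apply_l, permIso_apply_m, ht, Equiv.Perm.one_apply])
      · exact absurd ((SimpleGraph.mem_edgeSet _).mp he) madj_mm
      · by_cases ha : a = 0
        · subst ha
          exact c_congr (by
            simp only [hφd, permIso_apply_m, permIso_apply_r, ht])
        · calc c ⟨s(φ (Sum.inr (Sum.inl a)), φ (Sum.inr (Sum.inr u'))), _⟩
              = c (eU2 m (t a) (htne a ha)) := c_congr (by
                simp only [hφd, permIso_apply_m, permIso_apply_r, eU2])
            _ = c (eU2 m a ha) := hswap2 a ha _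
            _ = c ⟨s(Sum.inr (Sum.inl a), Sum.inr (Sum.inr u')), he⟩ := c_congr rfl
      · exact absurd ((SimpleGraph.mem_edgeSet _).mp he) madj_rl
      · by_cases hb : b = 0
        · subst hb
          exact c_congr (by
            simp only [hφd, permIso_apply_m, permIso_apply_r, ht])
        · calc c ⟨s(φ (Sum.inr (Sum.inr u)), φ (Sum.inr (Sum.inl b))), _⟩
              = c (eU2 m (t b) (htne b hb)) := c_congr (by
                simp only [hφd, permIso_apply_m, permIso_apply_r, eU2]
                exact Sym2.eq_swap)
            _ = c (eU2 m b hb) := hswap2 b hb _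
            _ = c ⟨s(Sum.inr (Sum.inr u), Sum.inr (Sum.inl b)), he⟩ := c_congr (by
                simp only [eU2]; exact Sym2.eq_swap)
      · exact absurd ((SimpleGraph.mem_edgeSet _).mp he) madj_rr
    have := hc φ hpres (Sum.inr (Sum.inl i.1))
    rw [hφd, permIso_apply_m] at this
    exact hne1 (by simpa [htd, Equiv.swap_apply_left] using
      (Sum.inl.inj (Sum.inr.inj this)).symm)
  -- counting
  have hcount : m ≤ k ^ 2 := by
    have := Fintype.card_le_of_injective p hpinj
    simpa [cardsub, sq] using this
  by_contra hlt
  push_neg at hlt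
  have hmk : m = k ^ 2 := le_antisymm hcount (by omega)
  have cardeq : Fintype.card {i : Fin (m+1) // i ≠ 0} = Fintype.card (Fin k × Fin k) := by
    simp [cardsub, hmk, sq]
  have hpbij : Function.Bijective p :=
    (Fintype.bijective_iff_injective_and_card p).mpr ⟨hpinj, cardeq⟩
  have hqbij : Function.Bijective q :=
    (Fintype.bijective_iff_injective_and_card q).mpr ⟨hqinj, cardeq⟩
  set pE := Equiv.ofBijective p hpbij with hpE
  set qE := Equiv.ofBijective q hqbij with hqE
  set σ₀ : Equiv.Perm {i : Fin (m+1) // i ≠ 0} := pE.trans qE.symm with hσ₀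
  set σ : Equiv.Perm (Fin (m+1)) := Equiv.Perm.ofSubtype σ₀ with hσdef
  have hσ0 : σ 0 = 0 := Equiv.Perm.ofSubtype_apply_of_not_mem σ₀ (by simp)
  have hσmem : ∀ (a : Fin (m+1)) (ha : a ≠ 0), σ a = (σ₀ ⟨a, ha⟩).1 :=
    fun a ha => Equiv.Perm.ofSubtype_apply_of_mem σ₀ ha
  have hσinvmem : ∀ (a : Fin (m+1)) (ha : a ≠ 0), σ⁻¹ a = (σ₀⁻¹ ⟨a, ha⟩).1 := by
    intro a ha
    rw [hσdef, ← map_inv]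
    exact Equiv.Perm.ofSubtype_apply_of_mem σ₀⁻¹ ha
  -- color relations
  have hqp : ∀ i : {i : Fin (m+1) // i ≠ 0}, q (σ₀ i) = p i := by
    intro i
    show qE (qE.symm (pE i)) = p i
    rw [Equiv.apply_symm_apply]
    simp [hpE]
  have hpq : ∀ i : {i : Fin (m+1) // i ≠ 0}, p (σ₀⁻¹ i) = q i := by
    intro i
    show pE (pE.symm (qE i)) = q i
    rw [Equiv.apply_symm_apply]
    simp [hqE]
  -- the cross automorphism preserves the coloring
  have hQ1 : ∀ (a : Fin (m+1)) (ha : a ≠ 0),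
      c (eU1 m (σ a) (sig_ne hσ0 ha)) = c (eV1 m a ha) := by
    intro a ha
    have h := congrArg Prod.fst (hqp ⟨a, ha⟩)
    simp only [hp, hq] at h
    calc c (eU1 m (σ a) (sig_ne hσ0 ha)) = c (eU1 m (σ₀ ⟨a,ha⟩).1 (σ₀ ⟨a,ha⟩).2) :=
          c_congr (by simp only [eU1]; rw [hσmem a ha])
      _ = c (eV1 m a ha) := h
  have hQ2 : ∀ (a : Fin (m+1)) (ha : a ≠ 0),
      c (eU2 m (σ a) (sig_ne hσ0 ha)) = c (eV2 m a ha) := by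
    intro a ha
    have h := congrArg Prod.snd (hqp ⟨a, ha⟩)
    simp only [hp, hq] at h
    calc c (eU2 m (σ a) (sig_ne hσ0 ha)) = c (eU2 m (σ₀ ⟨a,ha⟩).1 (σ₀ ⟨a,ha⟩).2) :=
          c_congr (by simp only [eU2]; rw [hσmem a ha])
      _ = c (eV2 m a ha) := h
  have hP1 : ∀ (a : Fin (m+1)) (ha : a ≠ 0),
      c (eV1 m (σ⁻¹ a) (siginv_ne hσ0 ha)) = c (eU1 m a ha) := by
    intro a ha
    have h := congrArg Prod.fst (hpq ⟨a, ha⟩)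
    simp only [hp, hq] at h
    calc c (eV1 m (σ⁻¹ a) (siginv_ne hσ0 ha)) = c (eV1 m (σ₀⁻¹ ⟨a,ha⟩).1 (σ₀⁻¹ ⟨a,ha⟩).2) :=
          c_congr (by simp only [eV1]; rw [hσinvmem a ha])
      _ = c (eU1 m a ha) := h
  have hP2 : ∀ (a : Fin (m+1)) (ha : a ≠ 0),
      c (eV2 m (σ⁻¹ a) (siginv_ne hσ0 ha)) = c (eU2 m a ha) := by
    intro a ha
    have h := congrArg Prod.snd (hpq ⟨a, ha⟩)
    simp only [hp, hq] at h
    calc c (eV2 m (σ⁻¹ a) (siginv_ne hσ0 ha)) = c (eV2 m (σ₀⁻¹ ⟨a,ha⟩).1 (σ₀⁻¹ ⟨a,ha⟩).2) :=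
          c_congr (by simp only [eV2]; rw [hσinvmem a ha])
      _ = c (eU2 m a ha) := h
  have hpres : ∀ e : (myc (_root_.starGraph m)).edgeSet, c ((crossIso hσ0).mapEdgeSet e) = c e := by
    rintro ⟨e, he⟩
    revert he
    refine Sym2.ind (fun x y => ?_) e
    intro he
    rw [c_map c (crossIso hσ0) he]
    rcases x with a | a | u <;> rcases y with b | b | u'
    · rcases star_adj.mp (madj_ll.mp he) with ⟨rfl, hb⟩ | ⟨rfl, ha⟩
      · calc c ⟨s(crossIso hσ0 (Sum.inl 0), crossIso hσ0 (Sum.inl b)), _⟩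
            = c (eU1 m (σ b) (sig_ne hσ0 hb)) := c_congr (by
              simp [crossIso_apply, crossFun, hb, eU1])
          _ = c (eV1 m b hb) := hQ1 b hb
          _ = c ⟨s(Sum.inl 0, Sum.inl b), he⟩ := c_congr (by
              simp only [eV1]; exact Sym2.eq_swap)
      · calc c ⟨s(crossIso hσ0 (Sum.inl a), crossIso hσ0 (Sum.inl 0)), _⟩
            = c (eU1 m (σ a) (sig_ne hσ0 ha)) := c_congr (by
              simp only [crossIso_apply, crossFun, ha, if_neg, if_pos, eU1]
              simp [ha])
          _ = c (eV1 m a ha) := hQ1 a ha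
          _ = c ⟨s(Sum.inl a, Sum.inl 0), he⟩ := c_congr rfl
    · rcases star_adj.mp (madj_lm.mp he) with ⟨rfl, hb⟩ | ⟨rfl, ha⟩
      · calc c ⟨s(crossIso hσ0 (Sum.inl 0), crossIso hσ0 (Sum.inr (Sum.inl b))), _⟩
            = c (eV1 m (σ⁻¹ b) (siginv_ne hσ0 hb)) := c_congr (by
              simp [crossIso_apply, crossFun, hb, eV1])
          _ = c (eU1 m b hb) := hP1 b hb
          _ = c ⟨s(Sum.inl 0, Sum.inr (Sum.inl b)), he⟩ := c_congr rfl
      · calc c ⟨s(crossIso hσ0 (Sum.inl a), crossIso hσ0 (Sum.inr (Sum.inl 0))), _⟩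
            = c (eU2 m (σ a) (sig_ne hσ0 ha)) := c_congr (by
              simp [crossIso_apply, crossFun, ha, eU2])
          _ = c (eV2 m a ha) := hQ2 a ha
          _ = c ⟨s(Sum.inl a, Sum.inr (Sum.inl 0)), he⟩ := c_congr rfl
    · exact absurd ((SimpleGraph.mem_edgeSet _).mp he) madj_lr
    · rcases star_adj.mp (madj_ml.mp he) with ⟨rfl, ha⟩ | ⟨rfl, hb⟩
      · calc c ⟨s(crossIso hσ0 (Sum.inr (Sum.inl a)), crossIso hσ0 (Sum.inl 0)), _⟩
            = c (eV1 m (σ⁻¹ a) (siginv_ne hσ0 ha)) := c_congr (by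
              simp [crossIso_apply, crossFun, ha, eV1])
          _ = c (eU1 m a ha) := hP1 a ha
          _ = c ⟨s(Sum.inr (Sum.inl a), Sum.inl 0), he⟩ := c_congr (by
              simp only [eU1]; exact Sym2.eq_swap)
      · calc c ⟨s(crossIso hσ0 (Sum.inr (Sum.inl 0)), crossIso hσ0 (Sum.inl b)), _⟩
            = c (eU2 m (σ b) (sig_ne hσ0 hb)) := c_congr (by
              simp [crossIso_apply, crossFun, hb, eU2])
          _ = c (eV2 m b hb) := hQ2 b hb
          _ = c ⟨s(Sum.inr (Sum.inl 0), Sum.inl b), he⟩ := c_congr (by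
              simp only [eV2]; exact Sym2.eq_swap)
    · exact absurd ((SimpleGraph.mem_edgeSet _).mp he) madj_mm
    · by_cases ha : a = 0
      · subst ha
        exact c_congr (by
          simp [crossIso_apply, crossFun])
      · calc c ⟨s(crossIso hσ0 (Sum.inr (Sum.inl a)), crossIso hσ0 (Sum.inr (Sum.inr u'))), _⟩
            = c (eV2 m (σ⁻¹ a) (siginv_ne hσ0 ha)) := c_congr (by
              simp [crossIso_apply, crossFun, ha, eV2])
          _ = c (eU2 m a ha) := hP2 a ha
          _ = c ⟨s(Sum.inr (Sum.inl a), Sum.inr (Sum.inr u')), he⟩ := c_congr rfl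
    · exact absurd ((SimpleGraph.mem_edgeSet _).mp he) madj_rl
    · by_cases hb : b = 0
      · subst hb
        exact c_congr (by
          simp [crossIso_apply, crossFun])
      · calc c ⟨s(crossIso hσ0 (Sum.inr (Sum.inr u)), crossIso hσ0 (Sum.inr (Sum.inl b))), _⟩
            = c (eV2 m (σ⁻¹ b) (siginv_ne hσ0 hb)) := c_congr (by
              simp [crossIso_apply, crossFun, hb, eV2])
          _ = c (eU2 m b hb) := hP2 b hb
          _ = c ⟨s(Sum.inr (Sum.inr u), Sum.inr (Sum.inl b)), he⟩ := c_congr (by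
              simp only [eU2]; exact Sym2.eq_swap)
    · exact absurd ((SimpleGraph.mem_edgeSet _).mp he) madj_rr
  have := hc (crossIso hσ0) hpres (Sum.inr (Sum.inr PUnit.unit))
  simp [crossIso, Function.Involutive.toPerm, crossFun] at this

end key

theorem distIndex_myc_star_ge (m : ℕ) (hm : 2 ≤ m) :
    sInf {r : ℕ | m + 1 ≤ r ^ 2} ≤ distIndex (myc (_root_.starGraph m)) := by
  have hne : {k : ℕ | ∃ c : (myc (_root_.starGraph m)).edgeSet → Fin k,
      IsDistEdgeColoring (myc (_root_.starGraph m)) c}.Nonempty := nonempty_dist hm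
  obtain ⟨c, hc⟩ := Nat.sInf_mem hne
  exact Nat.sInf_le (key_lemma hm c hc)
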